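/- For integers q, j with j - q ≥ q̃ + 1 ≥ 1, the sum over all strictly decreasing chains j > j_0 > j_1 > … > j_{q̃-1} > q (with j_{-1} = j, j_{q̃} = q) of the product Π_{l=0}^{q̃} C(j_{l-1} - 1, j_l - 1) equals C(j-1, q-1) * Σ_{l=1}^{q̃+1} l^(j-q) * (-1)^(q̃+1-l) * C(q̃+1, q̃+1-l). -/

import Mathlib

open Finset

/-- alternating sum `∑_{l=0}^{k} (-1)^{k+l} C(k,l) l^n` (number of surjections for n ≥ 1). -/
def Tsum (n k : ℕ) : ℤ :=
  ∑ l ∈ Finset.range (k+1), (-1)^(k+l) * (k.choose l : ℤ) * (l:ℤ)^n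

lemma Tsum_succ (n k : ℕ) :
    Tsum n (k+1) = (∑ m ∈ Finset.range (n+1), (n.choose m : ℤ) * Tsum m k) - Tsum n k := by
  have hb : ∀ l : ℕ, ((l:ℤ)+1)^n = ∑ m ∈ Finset.range (n+1), (n.choose m : ℤ) * (l:ℤ)^m := by
    intro l
    rw [add_pow]
    exact Finset.sum_congr rfl fun m _ => by ring
  have h2 : (∑ m ∈ Finset.range (n+1), (n.choose m : ℤ) * Tsum m k)
      = ∑ l ∈ Finset.range (k+1), (-1)^(k+l) * (k.choose l : ℤ) * ((l:ℤ)+1)^n := by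
    unfold Tsum
    simp_rw [Finset.mul_sum]
    rw [Finset.sum_comm]
    refine Finset.sum_congr rfl fun l _ => ?_
    rw [hb l, Finset.mul_sum]
    exact Finset.sum_congr rfl fun m _ => by ring
  have e1 : Tsum n k = (∑ l ∈ Finset.range k,
      (-1:ℤ)^(k+l+1) * (k.choose (l+1) : ℤ) * ((l:ℤ)+1)^n) + (-1:ℤ)^k * (0:ℤ)^n := by
    unfold Tsum
    rw [Finset.sum_range_succ']
    simp only [Nat.choose_zero_right, Nat.cast_one, mul_one, Nat.cast_zero, Nat.add_zero, add_zero]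
    congr 1
  have h4 : (∑ l ∈ Finset.range (k+1), (-1)^(k+l) * (k.choose (l+1) : ℤ) * ((l:ℤ)+1)^n)
      = -Tsum n k + (-1:ℤ)^k * (0:ℤ)^n := by
    rw [Finset.sum_range_succ, Nat.choose_succ_self, e1]
    push_cast
    rw [mul_zero, zero_mul, add_zero, neg_add, neg_add_cancel_right, ← Finset.sum_neg_distrib]
    refine Finset.sum_congr rfl fun l _ => ?_
    rw [pow_succ]
    ring
  have h3 : Tsum n (k+1)
      = (∑ l ∈ Finset.range (k+1), (-1)^(k+l) * (k.choose l : ℤ) * ((l:ℤ)+1)^n)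
      + ((∑ l ∈ Finset.range (k+1), (-1)^(k+l) * (k.choose (l+1) : ℤ) * ((l:ℤ)+1)^n)
        + (-1:ℤ)^(k+1) * (0:ℤ)^n) := by
    unfold Tsum
    rw [Finset.sum_range_succ', ← add_assoc, ← Finset.sum_add_distrib]
    simp only [Nat.choose_zero_right, Nat.cast_one, mul_one, Nat.cast_zero, Nat.add_zero]
    congr 1
    refine Finset.sum_congr rfl fun l _ => ?_
    rw [Nat.choose_succ_succ]
    push_cast
    have hs : (-1:ℤ)^(k+1+(l+1)) = (-1:ℤ)^(k+l) := by
      rw [show k+1+(l+1) = (k+l)+2 by ring, pow_add]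
      norm_num
    rw [hs]; ring
  rw [h3, h4, h2]
  rw [pow_succ]
  ring

lemma Tsum_rec (n k : ℕ) :
    Tsum n (k+1) = ∑ m ∈ Finset.range n, (n.choose m : ℤ) * Tsum m k := by
  rw [Tsum_succ, Finset.sum_range_succ, Nat.choose_self]
  push_cast
  ring

lemma Tsum_eq_zero : ∀ k n, n < k → Tsum n k = 0 := by
  intro k
  induction k with
  | zero => intro n hn; omega
  | succ k ih =>
    intro n hn
    rw [Tsum_rec]
    refine Finset.sum_eq_zero fun m hm => ?_
    rw [ih m (by simp at hm; omega), mul_zero]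

lemma Tsum_one {n : ℕ} (hn : 1 ≤ n) : Tsum n 1 = 1 := by
  unfold Tsum
  rw [Finset.sum_range_succ, Finset.sum_range_one]
  simp [zero_pow (by omega : n ≠ 0)]

lemma Tsum_eq_Icc {n k : ℕ} (hn : 1 ≤ n) :
    (∑ l ∈ Finset.Icc 1 k, (l : ℤ) ^ n * (-1) ^ (k - l) * (k.choose (k - l) : ℤ))
      = Tsum n k := by
  unfold Tsum
  rw [Finset.sum_range_succ']
  have h0 : (-1:ℤ)^(k+0) * (k.choose 0 : ℤ) * ((0:ℕ):ℤ)^n = 0 := by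
    simp [zero_pow (by omega : n ≠ 0)]
  rw [h0, add_zero]
  have : Finset.Icc 1 k = Finset.Ico 1 (k+1) := by
    rw [Finset.Ico_add_one_right_eq_Icc]
  rw [this, Finset.sum_Ico_eq_sum_range]
  simp only [Nat.add_sub_cancel]
  refine Finset.sum_congr rfl fun l hl => ?_
  simp only [Finset.mem_range] at hl
  have h1 : k - (1 + l) ≤ k := Nat.sub_le _ _
  have hchoose : k.choose (k - (1 + l)) = k.choose (l + 1) := by
    rw [show k - (1 + l) = k - (l + 1) by omega, Nat.choose_symm (by omega)]
  have hsign : (-1:ℤ)^(k - (1 + l)) = (-1:ℤ)^(k + (l + 1)) := by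
    rw [show k + (l + 1) = (k - (1 + l)) + 2 * (l + 1) by omega, pow_add, pow_mul]
    norm_num
  rw [hchoose, hsign]
  push_cast
  ring

def chainSet (N q k j : ℕ) : Finset (Fin (k+2) → Fin (N+1)) :=
  Finset.univ.filter (fun f => ((f 0 : ℕ) = j ∧ (f (Fin.last (k+1)) : ℕ) = q) ∧
    ∀ i m : Fin (k+2), i < m → f m < f i)

def Ssum (N q k j : ℕ) : ℤ :=
  ∑ f ∈ chainSet N q k j,
    ∏ l : Fin (k+1), (((f l.castSucc : ℕ) - 1).choose ((f l.succ : ℕ) - 1) : ℤ)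

lemma gap {m N : ℕ} (f : Fin (m+1) → Fin (N+1))
    (hf : ∀ i k : Fin (m+1), i < k → f k < f i) :
    ∀ i : Fin (m+1), (f i : ℕ) + (i : ℕ) ≤ (f 0 : ℕ) := by
  intro i
  induction i using Fin.induction with
  | zero => simp
  | succ i ih =>
    have h1 : f i.succ < f i.castSucc := hf _ _ (Fin.castSucc_lt_succ (i := i))
    have h2 := ih
    simp only [Fin.coe_castSucc] at h2
    simp only [Fin.val_succ]
    omega

lemma Ssum_zero {N q k j : ℕ} (h : j < q + (k+1)) : Ssum N q k j = 0 := by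
  refine Finset.sum_eq_zero fun f hf => ?_
  exfalso
  simp only [chainSet, Finset.mem_filter] at hf
  obtain ⟨-, ⟨h0, hl⟩, hmono⟩ := hf
  have := gap f hmono (Fin.last (k+1))
  rw [h0, hl] at this
  simp only [Fin.val_last] at this
  omega

lemma Ssum_base {N q j : ℕ} (hqj : q < j) (hjN : j ≤ N) :
    Ssum N q 0 j = ((j-1).choose (q-1) : ℤ) := by
  have hj : j < N + 1 := by omega
  have hq : q < N + 1 := by omega
  have hset : chainSet N q 0 j = {![(⟨j, hj⟩ : Fin (N+1)), ⟨q, hq⟩]} := by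
    ext f
    simp only [chainSet, Finset.mem_filter, Finset.mem_univ, true_and, Finset.mem_singleton]
    constructor
    · rintro ⟨⟨h0, h1⟩, -⟩
      funext i
      fin_cases i
      · exact Fin.ext (by simpa using h0)
      · exact Fin.ext (by simpa using h1)
    · rintro rfl
      refine ⟨⟨by simp, by simp [Fin.last]⟩, ?_⟩
      intro i m him
      fin_cases i <;> fin_cases m <;>
        simp_all [Fin.lt_def]
  rw [Ssum, hset, Finset.sum_singleton]
  rw [Fin.prod_univ_one]
  norm_num [Fin.last]

lemma Ssum_split {N q k j : ℕ} (hjN : j ≤ N) :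
    Ssum N q (k+1) j = ∑ j0 ∈ Finset.Ioo q j, ((j-1).choose (j0-1) : ℤ) * Ssum N q k j0 := by
  classical
  rw [Ssum]
  rw [← Finset.sum_fiberwise_of_maps_to (g := fun f : Fin (k+3) → Fin (N+1) => (f 1 : ℕ))
    (t := Finset.Ioo q j) ?_]
  · refine Finset.sum_congr rfl fun j0 hj0 => ?_
    simp only [Finset.mem_Ioo] at hj0
    rw [Ssum, Finset.mul_sum]
    refine Finset.sum_nbij' (fun f => f ∘ Fin.succ)
      (fun g => Fin.cons ⟨j, by omega⟩ g) ?_ ?_ ?_ ?_ ?_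
    · -- maps forward
      intro f hf
      simp only [Finset.mem_filter, chainSet, Finset.mem_univ, true_and] at hf ⊢
      obtain ⟨⟨⟨h0, hl⟩, hmono⟩, h1⟩ := hf
      refine ⟨⟨h1, ?_⟩, ?_⟩
      · show (f (Fin.last (k+1)).succ : ℕ) = q
        rwa [Fin.succ_last]
      · intro i m him
        exact hmono _ _ (by rwa [Fin.succ_lt_succ_iff])
    · -- maps backward
      intro g hg
      simp only [Finset.mem_filter, chainSet, Finset.mem_univ, true_and] at hg ⊢
      obtain ⟨⟨h0, hl⟩, hmono⟩ := hg
      have hle : ∀ i : Fin (k+2), (g i : ℕ) ≤ j0 := by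
        intro i
        rcases eq_or_lt_of_le (Fin.zero_le i) with hi | hi
        · rw [← hi, h0]
        · have := hmono 0 i hi; omega
      refine ⟨⟨⟨by simp, ?_⟩, ?_⟩, ?_⟩
      · show ((Fin.cons ⟨j, by omega⟩ g : Fin (k+3) → Fin (N+1)) (Fin.last (k+2)) : ℕ) = q
        rw [show Fin.last (k+2) = (Fin.last (k+1)).succ from (Fin.succ_last _).symm,
          Fin.cons_succ]
        exact hl
      · intro i m him
        rcases Fin.eq_zero_or_eq_succ i with rfl | ⟨i', rfl⟩
        · rcases Fin.eq_zero_or_eq_succ m with rfl | ⟨m', rfl⟩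
          · exact absurd him (lt_irrefl _)
          · rw [Fin.cons_succ, Fin.cons_zero]
            exact Fin.lt_def.mpr (by have := hle m'; simp; omega)
        · rcases Fin.eq_zero_or_eq_succ m with rfl | ⟨m', rfl⟩
          · exact absurd him (by simp [Fin.lt_def])
          · rw [Fin.cons_succ, Fin.cons_succ]
            exact hmono _ _ (by rwa [← Fin.succ_lt_succ_iff])
      · show ((Fin.cons ⟨j, by omega⟩ g : Fin (k+3) → Fin (N+1)) (0 : Fin (k+2)).succ : ℕ) = j0
        rw [Fin.cons_succ]
        exact h0
    · -- left inverse
      intro f hf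
      simp only [Finset.mem_filter, chainSet, Finset.mem_univ, true_and] at hf
      obtain ⟨⟨⟨h0, -⟩, -⟩, -⟩ := hf
      funext i
      rcases Fin.eq_zero_or_eq_succ i with rfl | ⟨i', rfl⟩
      · simp only [Fin.cons_zero]
        exact Fin.ext h0.symm
      · simp only [Function.comp_apply, Fin.cons_succ]
    · -- right inverse
      intro g hg
      funext i
      simp
    · -- values
      intro f hf
      simp only [Finset.mem_filter, chainSet, Finset.mem_univ, true_and] at hf
      obtain ⟨⟨⟨h0, -⟩, -⟩, h1⟩ := hf
      rw [Fin.prod_univ_succ]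
      congr 1
      simp only [Fin.castSucc_zero, Fin.succ_zero_eq_one, h0, h1]
  · intro f hf
    simp only [Finset.mem_filter, chainSet, Finset.mem_univ, true_and] at hf
    obtain ⟨⟨h0, hl⟩, hmono⟩ := hf
    simp only [Finset.mem_Ioo]
    constructor
    · have := hmono 1 (Fin.last (k+1+1)) (by
        rw [Fin.lt_def]; simp [Fin.last])
      rw [Fin.lt_def] at this
      omega
    · have := hmono 0 1 (by rw [Fin.lt_def]; simp)
      rw [Fin.lt_def] at this
      omega

lemma Ssum_main (q : ℕ) (hq : 1 ≤ q) :
    ∀ k j N, j ≤ N → k + 1 ≤ j - q →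
      Ssum N q k j = ((j-1).choose (q-1) : ℤ) * Tsum (j-q) (k+1) := by
  intro k
  induction k with
  | zero =>
    intro j N hjN hk
    rw [Ssum_base (by omega) hjN, Tsum_one (by omega), mul_one]
  | succ k ih =>
    intro j N hjN hk
    rw [Ssum_split hjN]
    have step : ∀ j0 ∈ Finset.Ioo q j, ((j-1).choose (j0-1) : ℤ) * Ssum N q k j0
        = ((j-1).choose (q-1) : ℤ) * (((j-q).choose (j0-q) : ℤ) * Tsum (j0-q) (k+1)) := by
      intro j0 hj0
      simp only [Finset.mem_Ioo] at hj0
      by_cases hc : k + 1 ≤ j0 - q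
      · rw [ih j0 N (by omega) hc, ← mul_assoc, ← mul_assoc]
        congr 1
        rw [← Nat.cast_mul, ← Nat.cast_mul,
          Nat.choose_mul (show q-1 ≤ j0-1 by omega),
          show j-1-(q-1) = j-q by omega, show j0-1-(q-1) = j0-q by omega]
      · rw [Ssum_zero (by omega), Tsum_eq_zero _ _ (by omega)]
        ring
    rw [Finset.sum_congr rfl step, ← Finset.mul_sum]
    congr 1
    have hre : (∑ j0 ∈ Finset.Ioo q j, (((j-q).choose (j0-q) : ℤ) * Tsum (j0-q) (k+1)))
        = ∑ m ∈ Finset.Ioo 0 (j-q), (((j-q).choose m : ℤ) * Tsum m (k+1)) := by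
      refine Finset.sum_nbij' (fun j0 => j0 - q) (fun m => m + q) ?_ ?_ ?_ ?_ ?_
      · intro a ha; simp only [Finset.mem_Ioo] at ha ⊢; omega
      · intro a ha; simp only [Finset.mem_Ioo] at ha ⊢; omega
      · intro a ha; simp only [Finset.mem_Ioo] at ha; show a - q + q = a; omega
      · intro a ha; simp only [Finset.mem_Ioo] at ha; show a + q - q = a; omega
      · intro a ha; rfl
    rw [hre, Tsum_rec]
    rw [Finset.range_eq_Ico, Finset.sum_eq_sum_Ico_succ_bot (by omega : 0 < j - q),
      Tsum_eq_zero _ _ (by omega), mul_zero, zero_add, Finset.Ico_add_one_left_eq_Ioo]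

/-- Sum over strictly decreasing chains `j > j₀ > j₁ > … > j_{q̃-1} > q`
(with `j₋₁ = j`, `j_{q̃} = q`) of the product `Π_{l=0}^{q̃} C(j_{l-1}-1, j_l-1)`:
it equals `C(j-1, q-1) * Σ_{l=1}^{q̃+1} l^(j-q) * (-1)^(q̃+1-l) * C(q̃+1, q̃+1-l)`.
Chains are encoded as functions `f : Fin (q̃+2) → Fin (j+1)` with `f 0 = j`,
`f (last) = q`, strictly decreasing. -/
theorem sum_over_simplex_IV (q j qt : ℕ) (hq : 1 ≤ q) (h : qt + 1 ≤ j - q) :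
    ∑ f ∈ Finset.univ.filter
        (fun f : Fin (qt + 2) → Fin (j + 1) =>
          ((f 0 : ℕ) = j ∧ (f (Fin.last (qt + 1)) : ℕ) = q) ∧
            ∀ i k : Fin (qt + 2), i < k → f k < f i),
      ∏ l : Fin (qt + 1),
        ((Nat.choose ((f l.castSucc : ℕ) - 1) ((f l.succ : ℕ) - 1) : ℤ)) =
    (Nat.choose (j - 1) (q - 1) : ℤ) *
      ∑ l ∈ Finset.Icc 1 (qt + 1),
        (l : ℤ) ^ (j - q) * (-1) ^ (qt + 1 - l) *
          (Nat.choose (qt + 1) (qt + 1 - l) : ℤ) := by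
  exact (Ssum_main q hq qt j j le_rfl h).trans
    (by rw [← Tsum_eq_Icc (show 1 ≤ j - q by omega)])
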